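/- Let G(∘) and G(∗) be two group structures on a finite set G with identities e ≠ f, and suppose a ∈ G \ {e,f} satisfies a⁻¹ = a^∗ (its inverses in the two groups coincide). Then d(a) ≥ 4, where d(g) = |{h ∈ G : g∘h ≠ g∗h}|. -/
import Mathlib

section helpers
variable {G : Type*}

private lemma aux_four {G : Type*} [Fintype G] [DecidableEq G]
    (m₁ m₂ : G → G → G) (e₁ e₂ : G) (a b : G)
    (hef : e₁ ≠ e₂)
    (ha₁ : a ≠ e₁) (ha₂ : a ≠ e₂)
    (h1r : ∀ x, m₁ x e₁ = x) (h1l : ∀ x, m₁ e₁ x = x)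
    (h2r : ∀ x, m₂ x e₂ = x)
    (hcl1 : ∀ x y z, m₁ x y = m₁ x z → y = z)
    (hcr1 : ∀ x y z, m₁ y x = m₁ z x → y = z)
    (hcl2 : ∀ x y z, m₂ x y = m₂ x z → y = z)
    (hab : m₁ a b = e₁) (htab : m₂ a b = e₂) (hba : m₁ b a = e₁)
    (hassoc : ∀ x y z, m₁ (m₁ x y) z = m₁ x (m₁ y z)) :
    4 ≤ (Finset.univ.filter fun h : G => m₁ a h ≠ m₂ a h).card := by
  have hbe : b ≠ e₁ := fun h => ha₁ (by rw [← h1r a, ← h, hab, h])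
  have hbf : b ≠ e₂ := fun h => ha₂ (by rw [← h2r a, ← h, htab, h])
  have hce : m₁ b e₂ ≠ e₁ := fun h => ha₂ (hcl1 b e₂ a (by rw [h, hba])).symm
  have hcf : m₁ b e₂ ≠ e₂ := fun h => hbe (hcr1 e₂ b e₁ (by rw [h, h1l]))
  have hcb : m₁ b e₂ ≠ b := fun h => hef (hcl1 b e₂ e₁ (by rw [h, h1r])).symm
  have m1 : m₁ a e₁ ≠ m₂ a e₁ := by
    rw [h1r a]
    intro h
    exact hef (hcl2 a e₁ e₂ (by rw [← h, h2r a]))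
  have m2 : m₁ a e₂ ≠ m₂ a e₂ := by
    rw [h2r a]
    intro h
    exact hef (hcl1 a e₁ e₂ (by rw [h1r a, h]))
  have m3 : m₁ a b ≠ m₂ a b := by rw [hab, htab]; exact hef
  have m4 : m₁ a (m₁ b e₂) ≠ m₂ a (m₁ b e₂) := by
    have h1 : m₁ a (m₁ b e₂) = e₂ := by rw [← hassoc, hab, h1l]
    rw [h1]
    intro h
    exact hcb (hcl2 a (m₁ b e₂) b (by rw [← h, htab]))
  have hsub : ({e₁, e₂, b, m₁ b e₂} : Finset G) ⊆
      Finset.univ.filter fun h : G => m₁ a h ≠ m₂ a h := by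
    intro x hx
    simp only [Finset.mem_insert, Finset.mem_singleton] at hx
    simp only [Finset.mem_filter, Finset.mem_univ, true_and]
    rcases hx with rfl | rfl | rfl | rfl
    · exact m1
    · exact m2
    · exact m3
    · exact m4
  have hcard : ({e₁, e₂, b, m₁ b e₂} : Finset G).card = 4 := by
    rw [Finset.card_insert_of_notMem (by
          simp only [Finset.mem_insert, Finset.mem_singleton]
          push_neg
          exact ⟨hef, Ne.symm hbe, Ne.symm hce⟩),
        Finset.card_insert_of_notMem (by
          simp only [Finset.mem_insert, Finset.mem_singleton]
          push_neg
          exact ⟨Ne.symm hbf, Ne.symm hcf⟩),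
        Finset.card_insert_of_notMem (by
          simp only [Finset.mem_singleton]
          exact Ne.symm hcb),
        Finset.card_singleton]
  calc 4 = ({e₁, e₂, b, m₁ b e₂} : Finset G).card := hcard.symm
    _ ≤ _ := Finset.card_le_card hsub

end helpers

theorem d_ge_four_of_common_inverse {G : Type*} [Fintype G] [DecidableEq G]
    (s t : Group G) (hef : s.one ≠ t.one)
    (a : G) (ha₁ : a ≠ s.one) (ha₂ : a ≠ t.one)
    (hinv : s.inv a = t.inv a) :
    4 ≤ (Finset.univ.filter fun h : G => s.mul a h ≠ t.mul a h).card := by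
  refine aux_four s.mul t.mul s.one t.one a (s.inv a) hef ha₁ ha₂
    (fun x => ?_) (fun x => ?_) (fun x => ?_)
    (fun x y z h => ?_) (fun x y z h => ?_) (fun x y z h => ?_)
    ?_ ?_ ?_ (fun x y z => ?_)
  · letI := s; exact mul_one x
  · letI := s; exact one_mul x
  · letI := t; exact mul_one x
  · letI := s; exact mul_left_cancel (a := x) h
  · letI := s; exact mul_right_cancel (b := x) h
  · letI := t; exact mul_left_cancel (a := x) h
  · letI := s; exact mul_inv_cancel a
  · rw [hinv]; letI := t; exact mul_inv_cancel a
  · letI := s; exact inv_mul_cancel a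
  · letI := s; exact mul_assoc x y z
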